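/- Let X be a topological space in which every point is a Gδ set, let Y ⊆ X, and let μ be a countably additive measure defined on all subsets of Y with μ(Y) = 1 such that every singleton has measure 0. Then X does not have the Rothberger property. -/

import Mathlib

open Set MeasureTheory Filter Topology

/-- `𝒰` is an open cover of the space `X`. -/
def IsOpenCover {X : Type*} [TopologicalSpace X] (𝒰 : Set (Set X)) : Prop :=
  (∀ U ∈ 𝒰, IsOpen U) ∧ ⋃₀ 𝒰 = Set.univ

/-- The Rothberger property `S₁^ω(𝒪,𝒪)`. -/
def RothbergerSpace (X : Type*) [TopologicalSpace X] : Prop :=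
  ∀ 𝒰 : ℕ → Set (Set X), (∀ n, IsOpenCover (𝒰 n)) →
    ∃ U : ℕ → Set X, (∀ n, U n ∈ 𝒰 n) ∧ (⋃ n, U n) = Set.univ

theorem stmt5 (X : Type*) [TopologicalSpace X]
    (hGδ : ∀ x : X, ∃ U : ℕ → Set X, (∀ n, IsOpen (U n)) ∧ (⋂ n, U n) = {x})
    (Y : Set X) (μ : @MeasureTheory.Measure ↥Y ⊤)
    (hprob : μ Set.univ = 1) (hsingle : ∀ y : ↥Y, μ {y} = 0) :
    ¬ RothbergerSpace X := by
  intro R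
  classical
  letI : MeasurableSpace ↥Y := ⊤
  set ε : ℕ → ENNReal := fun n => 2⁻¹ ^ (n + 2) with hεdef
  have hεpos : ∀ n, 0 < ε n := by
    intro n
    apply ENNReal.pow_pos
    simp
  -- the covers
  have hcov : ∀ n, IsOpenCover {W : Set X | IsOpen W ∧ μ (Subtype.val ⁻¹' W) < ε n} := by
    intro n
    refine ⟨fun U hU => hU.1, eq_univ_of_forall fun x => ?_⟩
    obtain ⟨U, hUopen, hUint⟩ := hGδ x
    set V : ℕ → Set X := fun m => ⋂ i ∈ Finset.range (m + 1), U i with hVdef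
    have hVopen : ∀ m, IsOpen (V m) := fun m =>
      isOpen_biInter_finset fun i _ => hUopen i
    have hVanti : Antitone V := by
      intro a b hab y hy
      simp only [hVdef, mem_iInter, Finset.mem_range] at hy ⊢
      intro i hi
      exact hy i (by omega)
    have hVint : (⋂ m, V m) = {x} := by
      rw [← hUint]
      ext y
      simp only [hVdef, mem_iInter, Finset.mem_range]
      constructor
      · intro h i
        exact h i i (by omega)
      · intro h m i _
        exact h i
    have hxV : ∀ m, x ∈ V m := by
      intro m
      have hx : x ∈ ⋂ m, V m := by rw [hVint]; exact rfl
      exact mem_iInter.mp hx m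
    -- continuity from above
    have hanti : Antitone fun m => (Subtype.val ⁻¹' V m : Set Y) :=
      fun a b hab => preimage_mono (hVanti hab)
    have hmeas : ∀ m, NullMeasurableSet (Subtype.val ⁻¹' V m : Set Y) μ :=
      fun m => (MeasurableSpace.measurableSet_top).nullMeasurableSet
    have hfin : ∃ m, μ (Subtype.val ⁻¹' V m : Set Y) ≠ ⊤ := by
      refine ⟨0, ?_⟩
      have h1 : μ (Subtype.val ⁻¹' V 0 : Set Y) ≤ 1 :=
        (measure_mono (subset_univ _)).trans_eq hprob
      exact (h1.trans_lt ENNReal.one_lt_top).ne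
    have htend := tendsto_measure_iInter_atTop (μ := μ) hmeas hanti hfin
    have hint0 : μ (⋂ m, (Subtype.val ⁻¹' V m : Set Y)) = 0 := by
      rw [← preimage_iInter, hVint]
      by_cases hx : x ∈ Y
      · have : (Subtype.val ⁻¹' ({x} : Set X) : Set Y) = {⟨x, hx⟩} := by
          ext y; simp [Subtype.ext_iff]
        rw [this]
        exact hsingle _
      · have : (Subtype.val ⁻¹' ({x} : Set X) : Set Y) = ∅ := by
          ext y
          simp only [mem_preimage, mem_singleton_iff, mem_empty_iff_false, iff_false]
          intro h
          exact hx (h ▸ y.2)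
        simp [this]
    rw [hint0] at htend
    obtain ⟨m, hm⟩ := (htend.eventually (gt_mem_nhds (hεpos n))).exists
    exact mem_sUnion.mpr ⟨V m, ⟨hVopen m, hm⟩, hxV m⟩
  obtain ⟨U, hsel, hUnion⟩ := R _ hcov
  have hsub : μ Set.univ ≤ ∑' n, μ (Subtype.val ⁻¹' U n : Set Y) := by
    have huniv : (Set.univ : Set Y) = ⋃ n, (Subtype.val ⁻¹' U n : Set Y) := by
      rw [← preimage_iUnion, hUnion, preimage_univ]
    rw [huniv]
    exact measure_iUnion_le _
  have hsum : ∑' n, μ (Subtype.val ⁻¹' U n : Set Y) ≤ ∑' n, ε n :=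
    ENNReal.tsum_le_tsum fun n => (hsel n).2.le
  have hgeo : ∑' n, ε n = 2⁻¹ := by
    have h1 : ∀ n, ε n = 2⁻¹ ^ n * 2⁻¹ ^ 2 := fun n => pow_add _ n 2
    calc ∑' n, ε n = ∑' n, (2⁻¹ : ENNReal) ^ n * 2⁻¹ ^ 2 := by
          exact tsum_congr h1
      _ = (∑' n, (2⁻¹ : ENNReal) ^ n) * 2⁻¹ ^ 2 := ENNReal.tsum_mul_right
      _ = (1 - 2⁻¹)⁻¹ * 2⁻¹ ^ 2 := by rw [ENNReal.tsum_geometric]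
      _ = 2 * (2⁻¹ * 2⁻¹) := by rw [ENNReal.one_sub_inv_two, inv_inv, sq]
      _ = 2⁻¹ := by
          rw [← mul_assoc, ENNReal.mul_inv_cancel (by norm_num) (by norm_num), one_mul]
  have : (1 : ENNReal) ≤ 2⁻¹ := by
    calc (1 : ENNReal) = μ Set.univ := hprob.symm
      _ ≤ ∑' n, μ (Subtype.val ⁻¹' U n : Set Y) := hsub
      _ ≤ ∑' n, ε n := hsum
      _ = 2⁻¹ := hgeo
  have h2 : ((2 : ENNReal))⁻¹ < 1 := by
    rw [ENNReal.inv_lt_one]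
    norm_num
  exact absurd this (not_le_of_gt h2)
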